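/- Let p be a prime and R a Noetherian commutative ring of characteristic p whose Frobenius endomorphism r ↦ r^p is flat (for example, a regular ring). Fix e ≥ 1 and let (M,F) be a finitely generated unit R[F^e]-module. Then every ascending chain N₁ ⊆ N₂ ⊆ N₃ ⊆ … of unit R[F^e]-submodules of M (R-submodules N_i with R·F(N_i) = N_i) stabilizes: there is an index i₀ such that N_i = N_{i₀} for all i ≥ i₀. -/

import Mathlib

open TensorProduct

/-- A copy of `R` whose `R`-module structure is twisted by the ring endomorphism `φ`:
`r • r' = φ r * r'`.  For `φ` the `e`-th Frobenius iterate this is the bimodule `R^e`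
of Lyubeznik/Blickle, i.e. the left tensor factor of the Frobenius functor `F^{e*}`. -/
def Twisted (R : Type) [CommRing R] (φ : R →+* R) : Type := R

instance (R : Type) [CommRing R] (φ : R →+* R) : AddCommGroup (Twisted R φ) :=
  inferInstanceAs (AddCommGroup R)

instance (R : Type) [CommRing R] (φ : R →+* R) : Module R (Twisted R φ) :=
  Module.compHom R φ

/-- The element of the twisted copy of `R` corresponding to `r`. -/
def tw {R : Type} [CommRing R] (φ : R →+* R) (r : R) : Twisted R φ := r

/-- `R·F(N)` : the `R`-submodule of `M` generated by the image of `N` under `F`.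
`R·F^j(N)` is its `j`-fold iterate `(spanF F)^[j] N`. -/
def spanF {R M : Type} [CommRing R] [AddCommGroup M] [Module R M]
    (F : M → M) (N : Submodule R M) : Submodule R M :=
  Submodule.span R (F '' (N : Set M))

/-- `(M, F)` is a *unit* `R[Fᵉ]`-module: the linearization
`θ : R ⊗_φ M → M`, `r ⊗ m ↦ r • F m`, is bijective. -/
def IsUnitFModule {R M : Type} [CommRing R] [AddCommGroup M] [Module R M]
    (φ : R →+* R) (F : M → M) : Prop :=
  ∃ θ : Twisted R φ ⊗[R] M →+ M,
    (∀ (r : R) (m : M), θ (tw φ r ⊗ₜ[R] m) = r • F m) ∧ Function.Bijective θ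

/-- `(M, F)` is a finitely generated `R[Fᵉ]`-module: there is a finite subset
`S ⊆ M` such that the elements `F^[j] s`, `j ≥ 0`, `s ∈ S`, generate `M` as an
`R`-module. -/
def IsFGFModule (R : Type) {M : Type} [CommRing R] [AddCommGroup M] [Module R M]
    (F : M → M) : Prop :=
  ∃ S : Finset M, Submodule.span R (⋃ j : ℕ, F^[j] '' (S : Set M)) = ⊤

/-! ### Auxiliary material -/

namespace FModAux

variable {R : Type} [CommRing R]

/-- The identity map `Twisted R φ → R`. -/
def untw (φ : R →+* R) (x : Twisted R φ) : R := x

lemma tw_untw (φ : R →+* R) (x : Twisted R φ) : tw φ (untw φ x) = x := rfl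

lemma smul_tw (φ : R →+* R) (s : R) (x : Twisted R φ) :
    s • x = tw φ (φ s * untw φ x) := rfl

/-- Multiplication by `r` on `Twisted R φ`, as an `R`-linear map. -/
def mulTw (φ : R →+* R) (r : R) : Twisted R φ →ₗ[R] Twisted R φ where
  toFun x := tw φ (r * untw φ x)
  map_add' x y := by
    show tw φ (r * (untw φ x + untw φ y)) = tw φ (r * untw φ x) + tw φ (r * untw φ y)
    unfold tw; exact (mul_add r (untw φ x) (untw φ y) : _)
  map_smul' s x := by
    show tw φ (r * (φ s * untw φ x)) = s • tw φ (r * untw φ x)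
    rw [smul_tw]
    unfold tw untw; exact mul_left_comm r (φ s) (x : R)

lemma mulTw_apply (φ : R →+* R) (r : R) (x : Twisted R φ) :
    mulTw φ r x = tw φ (r * untw φ x) := rfl

/-- `Twisted R φ` is flat over `R` when `φ` is a flat ring map. -/
lemma twisted_flat (φ : R →+* R) (h : φ.Flat) : Module.Flat R (Twisted R φ) := by
  have h1 : @Module.Flat R R _ _ (@Algebra.toModule R R _ _ φ.toAlgebra) := h
  exact h1

section spanF

variable {M : Type} [AddCommGroup M] [Module R M]
variable (φ : R →+* R) (F : M → M)

lemma spanF_mono {A B : Submodule R M} (h : A ≤ B) : spanF F A ≤ spanF F B :=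
  Submodule.span_mono (Set.image_mono h)

lemma spanF_iter_mono (j : ℕ) {A B : Submodule R M} (h : A ≤ B) :
    (spanF F)^[j] A ≤ (spanF F)^[j] B := by
  induction j generalizing A B with
  | zero => exact h
  | succ j ih =>
    rw [Function.iterate_succ_apply', Function.iterate_succ_apply']
    exact spanF_mono F (ih h)

variable (hFadd : ∀ x y : M, F (x + y) = F x + F y)
  (hFsl : ∀ (r : R) (m : M), F (r • m) = φ r • F m)

include hFadd in
lemma F_zero : F 0 = 0 := by
  have h := hFadd 0 0
  rw [add_zero] at h
  exact left_eq_add.mp h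

include hFadd hFsl in
lemma spanF_span (T : Set M) :
    spanF F (Submodule.span R T) = Submodule.span R (F '' T) := by
  apply le_antisymm
  · rw [spanF, Submodule.span_le]
    rintro _ ⟨x, hx, rfl⟩
    induction hx using Submodule.span_induction with
    | mem y hy => exact Submodule.subset_span ⟨y, hy, rfl⟩
    | zero => rw [F_zero F hFadd]; exact Submodule.zero_mem _
    | add x y hx hy ihx ihy => rw [hFadd]; exact Submodule.add_mem _ ihx ihy
    | smul r x hx ih => rw [hFsl]; exact Submodule.smul_mem _ _ ih
  · exact Submodule.span_mono (Set.image_mono Submodule.subset_span)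

include hFadd hFsl in
lemma spanF_iter_span (j : ℕ) (T : Set M) :
    (spanF F)^[j] (Submodule.span R T) = Submodule.span R (F^[j] '' T) := by
  induction j with
  | zero => simp
  | succ j ih =>
    rw [Function.iterate_succ_apply', ih, spanF_span φ F hFadd hFsl,
      Function.iterate_succ' F j, Set.image_comp]

include hFadd in
lemma spanF_bot : spanF F (⊥ : Submodule R M) = ⊥ := by
  rw [spanF]
  have : (F '' ((⊥ : Submodule R M) : Set M)) = {0} := by
    rw [Submodule.bot_coe, Set.image_singleton, F_zero F hFadd]
  rw [this, Submodule.span_singleton_eq_bot.mpr rfl]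

include hFadd in
lemma spanF_sup (A B : Submodule R M) :
    spanF F (A ⊔ B) = spanF F A ⊔ spanF F B := by
  apply le_antisymm
  · rw [spanF, Submodule.span_le]
    rintro _ ⟨x, hx, rfl⟩
    obtain ⟨a, ha, b, hb, rfl⟩ := Submodule.mem_sup.mp hx
    rw [hFadd]
    exact Submodule.add_mem _
      (Submodule.mem_sup_left (Submodule.subset_span ⟨a, ha, rfl⟩))
      (Submodule.mem_sup_right (Submodule.subset_span ⟨b, hb, rfl⟩))
  · exact sup_le (spanF_mono F le_sup_left) (spanF_mono F le_sup_right)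

include hFadd hFsl in
lemma spanF_fg {A : Submodule R M} (h : A.FG) : (spanF F A).FG := by
  obtain ⟨s, rfl⟩ := h
  rw [spanF_span φ F hFadd hFsl]
  exact Submodule.fg_def.mpr ⟨F '' ↑s, s.finite_toSet.image F, rfl⟩

end spanF

end FModAux

namespace FModAux

variable {R M : Type} [CommRing R] [AddCommGroup M] [Module R M]
variable (φ : R →+* R) (F : M → M)

section theta

variable (θ : Twisted R φ ⊗[R] M →+ M)
  (hθ : ∀ (r : R) (m : M), θ (tw φ r ⊗ₜ[R] m) = r • F m)

include hθ in
lemma theta_tmul (t : Twisted R φ) (m : M) : θ (t ⊗ₜ[R] m) = untw φ t • F m := by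
  rw [← tw_untw φ t, hθ]
  rfl

include hθ in
lemma theta_smul (r : R) (z : Twisted R φ ⊗[R] M) :
    θ (LinearMap.rTensor M (mulTw φ r) z) = r • θ z := by
  induction z with
  | zero => rw [map_zero, map_zero, smul_zero]
  | tmul t m =>
    rw [LinearMap.rTensor_tmul, theta_tmul φ F θ hθ, theta_tmul φ F θ hθ, mulTw_apply]
    show (r * untw φ t) • F m = r • untw φ t • F m
    rw [mul_smul]
  | add x y hx hy => rw [map_add, map_add, map_add, hx, hy, smul_add]

include hθ in
lemma image_range_eq_spanF (A : Submodule R M) :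
    θ '' ((LinearMap.range (LinearMap.lTensor (Twisted R φ) A.subtype)) :
        Set (Twisted R φ ⊗[R] M)) = (spanF F A : Set M) := by
  apply Set.Subset.antisymm
  · rintro _ ⟨z, hz, rfl⟩
    obtain ⟨y, rfl⟩ := hz
    induction y with
    | zero => rw [map_zero, map_zero]; exact (spanF F A).zero_mem
    | tmul t a =>
      rw [LinearMap.lTensor_tmul, theta_tmul φ F θ hθ]
      exact Submodule.smul_mem _ _ (Submodule.subset_span ⟨(a : M), a.2, rfl⟩)
    | add x y hx hy => rw [map_add, map_add]; exact (spanF F A).add_mem hx hy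
  · intro x hx
    induction hx using Submodule.span_induction with
    | mem y hy =>
      obtain ⟨a, ha, rfl⟩ := hy
      refine ⟨tw φ 1 ⊗ₜ[R] a, ⟨(tw φ 1) ⊗ₜ[R] (⟨a, ha⟩ : A), rfl⟩, ?_⟩
      rw [hθ, one_smul]
    | zero => exact ⟨0, Submodule.zero_mem _, map_zero θ⟩
    | add x y hx hy ihx ihy =>
      obtain ⟨zx, hzx, rfl⟩ := ihx
      obtain ⟨zy, hzy, rfl⟩ := ihy
      exact ⟨zx + zy, Submodule.add_mem _ hzx hzy, map_add θ zx zy⟩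
    | smul r x hx ih =>
      obtain ⟨z, hz, rfl⟩ := ih
      refine ⟨LinearMap.rTensor M (mulTw φ r) z, ?_, theta_smul φ F θ hθ r z⟩
      obtain ⟨y, rfl⟩ := hz
      refine ⟨LinearMap.rTensor A (mulTw φ r) y, ?_⟩
      rw [← LinearMap.comp_apply, ← LinearMap.comp_apply,
        LinearMap.lTensor_comp_rTensor, LinearMap.rTensor_comp_lTensor]

end theta

section flatinf

variable (T : Type) [AddCommGroup T] [Module R T] [Module.Flat R T]

lemma range_lTensor_eq_ker (X : Submodule R M) :
    LinearMap.range (LinearMap.lTensor T X.subtype)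
      = LinearMap.ker (LinearMap.lTensor T X.mkQ) :=
  (LinearMap.exact_iff.mp
    (Module.Flat.lTensor_exact T (LinearMap.exact_subtype_mkQ X))).symm

lemma range_lTensor_inf (A C : Submodule R M) :
    LinearMap.range (LinearMap.lTensor T A.subtype)
        ⊓ LinearMap.range (LinearMap.lTensor T C.subtype)
      = LinearMap.range (LinearMap.lTensor T (A ⊓ C).subtype) := by
  apply le_antisymm
  · rw [range_lTensor_eq_ker, range_lTensor_eq_ker, range_lTensor_eq_ker]
    intro x hx
    obtain ⟨hA, hC⟩ := Submodule.mem_inf.mp hx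
    rw [LinearMap.mem_ker] at hA hC ⊢
    set g : (M ⧸ (A ⊓ C)) →ₗ[R] (M ⧸ A) × (M ⧸ C) :=
      Submodule.liftQ (A ⊓ C) (A.mkQ.prod C.mkQ)
        (by rw [LinearMap.ker_prod, Submodule.ker_mkQ, Submodule.ker_mkQ]) with hgdef
    have hg : Function.Injective g := by
      rw [← LinearMap.ker_eq_bot]
      apply Submodule.ker_liftQ_eq_bot
      rw [LinearMap.ker_prod, Submodule.ker_mkQ, Submodule.ker_mkQ]
    have hginj : Function.Injective (LinearMap.lTensor T g) :=
      Module.Flat.lTensor_preserves_injective_linearMap g hg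
    have hcomp : (LinearMap.lTensor T g).comp (LinearMap.lTensor T (A ⊓ C).mkQ)
        = LinearMap.lTensor T (A.mkQ.prod C.mkQ) := by
      rw [← LinearMap.lTensor_comp]
      congr 1
    have hprod : ∀ z : T ⊗[R] M,
        (TensorProduct.prodRight R R T (M ⧸ A) (M ⧸ C))
            (LinearMap.lTensor T (A.mkQ.prod C.mkQ) z)
          = (LinearMap.lTensor T A.mkQ z, LinearMap.lTensor T C.mkQ z) := by
      intro z
      induction z with
      | zero => simp; rfl
      | tmul t m => simp
      | add x y hx hy => rw [map_add, map_add, hx, hy, map_add, map_add, Prod.mk_add_mk]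
    apply hginj
    rw [← LinearMap.comp_apply, hcomp, map_zero]
    apply (TensorProduct.prodRight R R T (M ⧸ A) (M ⧸ C)).injective
    rw [hprod, hA, hC, map_zero]
    rfl
  · have h1 : (A ⊓ C).subtype = A.subtype.comp (Submodule.inclusion inf_le_left) := rfl
    have h2 : (A ⊓ C).subtype = C.subtype.comp (Submodule.inclusion inf_le_right) := rfl
    refine le_inf ?_ ?_
    · rw [h1, LinearMap.lTensor_comp]
      exact LinearMap.range_comp_le_range _ _
    · rw [h2, LinearMap.lTensor_comp]
      exact LinearMap.range_comp_le_range _ _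

end flatinf

section inf

variable (θ : Twisted R φ ⊗[R] M →+ M)
  (hθ : ∀ (r : R) (m : M), θ (tw φ r ⊗ₜ[R] m) = r • F m)
  (hbij : Function.Bijective θ)
  [Module.Flat R (Twisted R φ)]

include hθ hbij in
lemma spanF_inf (A C : Submodule R M) :
    spanF F (A ⊓ C) = spanF F A ⊓ spanF F C := by
  apply SetLike.coe_injective
  rw [Submodule.coe_inf, ← image_range_eq_spanF φ F θ hθ A,
    ← image_range_eq_spanF φ F θ hθ C, ← image_range_eq_spanF φ F θ hθ (A ⊓ C),
    ← Set.image_inter hbij.injective, ← Submodule.coe_inf, range_lTensor_inf]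

end inf

end FModAux

namespace FModAux

variable {R M : Type} [CommRing R] [AddCommGroup M] [Module R M]
variable (φ : R →+* R) (F : M → M)

lemma fg_range_sup (f : ℕ → Submodule R M) (hf : ∀ l, (f l).FG) (n : ℕ) :
    ((Finset.range n).sup f).FG := by
  induction n with
  | zero => simpa using Submodule.fg_bot
  | succ n ih =>
    rw [Finset.range_add_one, Finset.sup_insert]
    exact Submodule.FG.sup (hf n) ih

lemma spanF_range_sup (hFadd : ∀ x y : M, F (x + y) = F x + F y)
    (f : ℕ → Submodule R M) (n : ℕ) :
    spanF F ((Finset.range n).sup f) = (Finset.range n).sup (fun l => spanF F (f l)) := by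
  induction n with
  | zero => simpa using spanF_bot F hFadd
  | succ n ih =>
    rw [Finset.range_add_one, Finset.sup_insert, Finset.sup_insert, spanF_sup F hFadd, ih]

end FModAux

/-- Over a Noetherian ring of characteristic `p` with flat
Frobenius, a finitely generated unit `R[Fᵉ]`-module satisfies the ascending chain
condition on unit `R[Fᵉ]`-submodules. -/
theorem unit_submodule_acc
    (p : ℕ) [Fact p.Prime]
    (R : Type) [CommRing R] [IsNoetherianRing R] [CharP R p]
    (φp : R →+* R) (hφp : ∀ r : R, φp r = r ^ p) (hflat : φp.Flat)
    (M : Type) [AddCommGroup M] [Module R M]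
    (e : ℕ) (he : 1 ≤ e)
    (φ : R →+* R) (hφ : ∀ r : R, φ r = r ^ p ^ e)
    (F : M → M) (hFadd : ∀ x y : M, F (x + y) = F x + F y)
    (hFsl : ∀ (r : R) (m : M), F (r • m) = r ^ p ^ e • F m)
    (hunit : IsUnitFModule φ F) (hfg : IsFGFModule R F)
    (N : ℕ → Submodule R M) (hmono : Monotone N)
    (hN : ∀ i, spanF F (N i) = N i) :
    ∃ i₀ : ℕ, ∀ i, i₀ ≤ i → N i = N i₀ := by
  classical
  obtain ⟨θ, hθ, hbij⟩ := hunit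
  obtain ⟨S, hS⟩ := hfg
  -- the Frobenius iterate `φ` is flat
  have hφflat : φ.Flat := by
    have hn : ∀ n : ℕ, (φp ^ n : R →+* R).Flat := by
      intro n
      induction n with
      | zero => rw [pow_zero]; exact RingHom.Flat.id R
      | succ n ih =>
        rw [pow_succ, RingHom.mul_def]
        haveI := ih
        haveI := hflat
        exact RingHom.Flat.comp hflat ih
    have hiter : ∀ (n : ℕ) (r : R), φp^[n] r = r ^ p ^ n := by
      intro n
      induction n with
      | zero => intro r; simp
      | succ n ih =>
        intro r
        rw [Function.iterate_succ_apply, ih, hφp, ← pow_mul, ← pow_succ']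
    have hφeq : φ = φp ^ e := by
      ext r
      rw [hφ, RingHom.coe_pow, hiter]
    rw [hφeq]
    exact hn e
  haveI hTflat : Module.Flat R (Twisted R φ) := FModAux.twisted_flat φ hφflat
  have hFsl' : ∀ (r : R) (m : M), F (r • m) = φ r • F m := fun r m => by
    rw [hφ]; exact hFsl r m
  have hinf : ∀ A C : Submodule R M, spanF F (A ⊓ C) = spanF F A ⊓ spanF F C :=
    fun A C => FModAux.spanF_inf φ F θ hθ hbij A C
  set N₀ : Submodule R M := Submodule.span R (S : Set M) with hN₀def
  have hiterspan : ∀ j : ℕ, (spanF F)^[j] N₀ = Submodule.span R (F^[j] '' (S : Set M)) :=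
    fun j => FModAux.spanF_iter_span φ F hFadd hFsl' j _
  have htop : (⨆ j : ℕ, (spanF F)^[j] N₀) = ⊤ := by
    rw [← hS, Submodule.span_iUnion]
    exact iSup_congr hiterspan
  -- `spanF F ⊤ = ⊤` since `θ` is surjective
  have hspanFtop : spanF F (⊤ : Submodule R M) = ⊤ := by
    have hsub : Function.Surjective (⊤ : Submodule R M).subtype := fun m => ⟨⟨m, trivial⟩, rfl⟩
    have hr : LinearMap.range (LinearMap.lTensor (Twisted R φ) (⊤ : Submodule R M).subtype)
        = ⊤ := LinearMap.range_eq_top.mpr (LinearMap.lTensor_surjective _ hsub)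
    apply SetLike.coe_injective
    rw [← FModAux.image_range_eq_spanF φ F θ hθ ⊤, hr, Submodule.top_coe, Submodule.top_coe,
      Set.image_univ, Set.range_eq_univ.mpr hbij.surjective]
  -- every element lies in `spanF F` of a finitely generated submodule
  have hmemfin : ∀ x : M, ∃ u : Finset M, x ∈ spanF F (Submodule.span R (u : Set M)) := by
    intro x
    have hx : x ∈ spanF F (⊤ : Submodule R M) := by
      rw [hspanFtop]; exact Submodule.mem_top
    rw [spanF] at hx
    have hfin : ∃ u : Finset M, x ∈ Submodule.span R (F '' (u : Set M)) := by
      induction hx using Submodule.span_induction with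
      | mem y hy =>
        obtain ⟨m, -, rfl⟩ := hy
        exact ⟨{m}, Submodule.subset_span (by simp)⟩
      | zero => exact ⟨∅, Submodule.zero_mem _⟩
      | add a b ha hb iha ihb =>
        obtain ⟨u, hu⟩ := iha
        obtain ⟨v, hv⟩ := ihb
        refine ⟨u ∪ v, Submodule.add_mem _ ?_ ?_⟩
        · exact Submodule.span_mono (Set.image_mono (by simp)) hu
        · exact Submodule.span_mono (Set.image_mono (by simp)) hv
      | smul r a ha ih =>
        obtain ⟨u, hu⟩ := ih
        exact ⟨u, Submodule.smul_mem _ _ hu⟩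
    obtain ⟨u, hu⟩ := hfin
    exact ⟨u, Submodule.span_mono (Set.image_mono Submodule.subset_span) hu⟩
  -- a finitely generated submodule `N₁` with `N₀ ≤ spanF F N₁`
  have hexN₁ : ∀ s : Finset M, ∃ u : Finset M,
      Submodule.span R (s : Set M) ≤ spanF F (Submodule.span R (u : Set M)) := by
    intro s
    induction s using Finset.induction_on with
    | empty => exact ⟨∅, by simp⟩
    | @insert a s ha ih =>
      obtain ⟨u, hu⟩ := ih
      obtain ⟨v, hv⟩ := hmemfin a
      refine ⟨u ∪ v, ?_⟩
      rw [Finset.coe_insert, Submodule.span_insert]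
      apply sup_le
      · rw [Submodule.span_singleton_le_iff_mem]
        exact FModAux.spanF_mono F (Submodule.span_mono (by simp)) hv
      · exact le_trans hu (FModAux.spanF_mono F (Submodule.span_mono (by simp)))
  obtain ⟨u₁, hN₀le⟩ := hexN₁ S
  set N₁ : Submodule R M := Submodule.span R (u₁ : Set M) with hN₁def
  have hN₁fg : N₁.FG := ⟨u₁, rfl⟩
  -- `N₁` is contained in some finite stage of the filtration by iterates of `N₀`
  set P : ℕ → Submodule R M := fun j => (Finset.range (j+1)).sup (fun l => (spanF F)^[l] N₀)
    with hPdef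
  have hPmono : Monotone P := fun a b hab =>
    Finset.sup_mono (Finset.range_subset_range.mpr (by omega))
  have hPtop : (⨆ j, P j) = ⊤ := by
    apply le_antisymm le_top
    rw [← htop]
    apply iSup_le
    intro j
    exact le_trans
      (Finset.le_sup (f := fun l => (spanF F)^[l] N₀) (Finset.self_mem_range_succ j))
      (le_iSup P j)
  obtain ⟨t, ht⟩ := (CompleteLattice.isCompactElement_iff_exists_le_iSup_of_le_iSup N₁).mp
    ((Submodule.fg_iff_compact N₁).mp hN₁fg) ℕ P (by rw [hPtop]; exact le_top)
  set k : ℕ := t.sup id + 1 with hkdef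
  have hN₁leP : N₁ ≤ P k := by
    refine le_trans ht (Finset.sup_le fun j hj => hPmono ?_)
    have : j ≤ t.sup id := Finset.le_sup (f := id) hj
    omega
  -- the root `B`
  set B : Submodule R M := (Finset.range (k+1)).sup (fun l => (spanF F)^[l] N₁) with hBdef
  have hiterfg : ∀ l : ℕ, ((spanF F)^[l] N₁).FG := by
    intro l
    induction l with
    | zero => exact hN₁fg
    | succ l ih =>
      rw [Function.iterate_succ_apply']
      exact FModAux.spanF_fg φ F hFadd hFsl' ih
  have hBfg : B.FG := FModAux.fg_range_sup _ hiterfg (k+1)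
  have hspanFB : spanF F B
      = (Finset.range (k+1)).sup (fun l => (spanF F)^[l+1] N₁) := by
    rw [hBdef, FModAux.spanF_range_sup F hFadd]
    apply Finset.sup_congr rfl
    intro l _
    exact (Function.iterate_succ_apply' (spanF F) l N₁).symm
  have hN₁leq : N₁ ≤ spanF F B := by
    refine le_trans hN₁leP ?_
    rw [hspanFB]
    apply Finset.sup_le
    intro l hl
    refine le_trans (FModAux.spanF_iter_mono F l hN₀le) ?_
    rw [← Function.iterate_succ_apply (spanF F) l N₁]
    exact Finset.le_sup (f := fun l => (spanF F)^[l+1] N₁) hl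
  have hBroot : B ≤ spanF F B := by
    apply Finset.sup_le
    intro l hl
    cases l with
    | zero => simpa using hN₁leq
    | succ l =>
      rw [Function.iterate_succ_apply']
      apply FModAux.spanF_mono
      rw [hBdef]
      refine Finset.le_sup (f := fun l => (spanF F)^[l] N₁) ?_
      have := Finset.mem_range.mp hl
      exact Finset.mem_range.mpr (by omega)
  -- the exhausting chain of iterates of the root
  set Q : ℕ → Submodule R M := fun j => (spanF F)^[j] B with hQdef
  have hQsucc : ∀ j, Q (j+1) = spanF F (Q j) :=
    fun j => Function.iterate_succ_apply' (spanF F) j B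
  have hQmono : Monotone Q := by
    apply monotone_nat_of_le_succ
    intro j
    show (spanF F)^[j] B ≤ (spanF F)^[j+1] B
    rw [Function.iterate_succ_apply]
    exact FModAux.spanF_iter_mono F j hBroot
  have hN₀B : N₀ ≤ B := by
    refine le_trans hN₀le ?_
    have h1 : (spanF F)^[1] N₁ ≤ B := by
      rw [hBdef]
      exact Finset.le_sup (f := fun l => (spanF F)^[l] N₁)
        (Finset.mem_range.mpr (by omega))
    simpa using h1
  have hQtop : (⨆ j, Q j) = ⊤ := by
    apply le_antisymm le_top
    rw [← htop]
    apply iSup_le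
    intro j
    exact le_trans (FModAux.spanF_iter_mono F j hN₀B) (le_iSup Q j)
  -- a unit submodule is determined by its intersection with the root
  have hkey : ∀ i j : ℕ, N i ⊓ Q j = (spanF F)^[j] (N i ⊓ B) := by
    intro i j
    induction j with
    | zero => rfl
    | succ j ih =>
      rw [hQsucc j]
      conv_lhs => rw [← hN i]
      rw [← hinf, ih]
      exact (Function.iterate_succ_apply' (spanF F) j (N i ⊓ B)).symm
  have hrep : ∀ i, N i = ⨆ j, (spanF F)^[j] (N i ⊓ B) := by
    intro i
    apply le_antisymm
    · intro x hx
      have hxT : x ∈ ⨆ j, Q j := by rw [hQtop]; exact Submodule.mem_top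
      obtain ⟨j, hj⟩ := (Submodule.mem_iSup_of_directed _ (hQmono.directed_le)).mp hxT
      have hmem : x ∈ N i ⊓ Q j := ⟨hx, hj⟩
      rw [hkey i j] at hmem
      exact Submodule.mem_iSup_of_mem j hmem
    · apply iSup_le
      intro j
      rw [← hkey i j]
      exact inf_le_left
  -- stabilization via Noetherianity of the root
  haveI hBNoeth : IsNoetherian R B := isNoetherian_of_fg_of_noetherian B hBfg
  set f : ℕ →o Submodule R B :=
    ⟨fun i => (N i ⊓ B).comap B.subtype,
      fun a b hab => Submodule.comap_mono (inf_le_inf_right B (hmono hab))⟩ with hfdef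
  obtain ⟨i₀, hi₀⟩ := monotone_stabilizes_iff_noetherian.mpr hBNoeth f
  refine ⟨i₀, fun i hi => ?_⟩
  have hmapf : ∀ m : ℕ, Submodule.map B.subtype (f m) = N m ⊓ B := by
    intro m
    show Submodule.map B.subtype (Submodule.comap B.subtype (N m ⊓ B)) = N m ⊓ B
    rw [Submodule.map_comap_subtype]
    exact inf_eq_right.mpr inf_le_right
  have hinfeq : N i ⊓ B = N i₀ ⊓ B := by
    rw [← hmapf i, ← hmapf i₀, hi₀ i hi]
  rw [hrep i, hrep i₀, hinfeq]
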